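/- Let the T recorded columns of (U_L, Y_L) each be a trajectory of the LTI system with initial states given by the columns of X_1, assume the stacked matrix [X_1; U_L] ∈ ℝ^{(n+Lm)×T} has full row rank n + Lm, and assume the observability matrix O_{T_ini}(A,C) has full column rank n. Let M† be a Moore–Penrose pseudoinverse of M = [Y_ini; U_ini; U_N] and set P* = Y_N M†. Suppose (u_ini, y_ini) are the first T_ini inputs and outputs of some trajectory of the system (i.e., they are generated by the system from some initial state). Then for every u_N ∈ ℝ^{Nm} and y_N ∈ ℝ^{Np}: there exists g ∈ ℝ^T with Y_ini g = y_ini, U_ini g = u_ini, U_N g = u_N, and Y_N g = y_N, if and only if y_N = P* · [y_ini; u_ini; u_N]. In other words, the DeePC constraint set and the SPC constraint set describe the same pairs (u_N, y_N). -/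

import Mathlib

open Matrix

/-- `(u, y)` is a trajectory of the discrete-time LTI system `(A, B, C, D)` of length `L`,
started from the initial state `x₁`. -/
def IsTrajectoryFrom {n m p : ℕ} (A : Matrix (Fin n) (Fin n) ℝ) (B : Matrix (Fin n) (Fin m) ℝ)
    (C : Matrix (Fin p) (Fin n) ℝ) (D : Matrix (Fin p) (Fin m) ℝ) (L : ℕ)
    (x₁ : Fin n → ℝ) (u : Fin L → Fin m → ℝ) (y : Fin L → Fin p → ℝ) : Prop :=
  ∃ x : Fin L → Fin n → ℝ,
    (∀ h : 0 < L, x ⟨0, h⟩ = x₁) ∧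
    (∀ k : ℕ, ∀ h : k + 1 < L,
      x ⟨k + 1, h⟩ =
        A.mulVec (x ⟨k, Nat.lt_of_succ_lt h⟩) + B.mulVec (u ⟨k, Nat.lt_of_succ_lt h⟩)) ∧
    (∀ k : Fin L, y k = C.mulVec (x k) + D.mulVec (u k))

/-- `(u, y)` is a trajectory of the discrete-time LTI system `(A, B, C, D)` of length `L`. -/
def IsTrajectory {n m p : ℕ} (A : Matrix (Fin n) (Fin n) ℝ) (B : Matrix (Fin n) (Fin m) ℝ)
    (C : Matrix (Fin p) (Fin n) ℝ) (D : Matrix (Fin p) (Fin m) ℝ) (L : ℕ)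
    (u : Fin L → Fin m → ℝ) (y : Fin L → Fin p → ℝ) : Prop :=
  ∃ x₁ : Fin n → ℝ, IsTrajectoryFrom A B C D L x₁ u y

/-- The observability matrix `O_l(A, C) = [C; CA; …; CA^{l-1}]`. -/
def obsMat {n p : ℕ} (A : Matrix (Fin n) (Fin n) ℝ) (C : Matrix (Fin p) (Fin n) ℝ) (l : ℕ) :
    Matrix (Fin l × Fin p) (Fin n) ℝ :=
  fun ki j => (C * A ^ (ki.1 : ℕ)) ki.2 j

/-- `Mp` is a Moore–Penrose pseudoinverse of `M`. -/
def IsMoorePenrose {q T : Type*} [Fintype q] [Fintype T]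
    (M : Matrix q T ℝ) (Mp : Matrix T q ℝ) : Prop :=
  M * Mp * M = M ∧ Mp * M * Mp = Mp ∧ (M * Mp)ᵀ = M * Mp ∧ (Mp * M)ᵀ = Mp * M

def extFn {m : ℕ} (L : ℕ) (u : Fin L → Fin m → ℝ) : ℕ → Fin m → ℝ :=
  fun k => if h : k < L then u ⟨k, h⟩ else 0

def st {n m : ℕ} (A : Matrix (Fin n) (Fin n) ℝ) (B : Matrix (Fin n) (Fin m) ℝ)
    (x₁ : Fin n → ℝ) (u : ℕ → Fin m → ℝ) : ℕ → Fin n → ℝ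
  | 0 => x₁
  | k+1 => A.mulVec (st A B x₁ u k) + B.mulVec (u k)

lemma st_congr {n m : ℕ} {A : Matrix (Fin n) (Fin n) ℝ} {B : Matrix (Fin n) (Fin m) ℝ}
    {x₁ : Fin n → ℝ} {u u' : ℕ → Fin m → ℝ} {k : ℕ} (hu : ∀ i < k, u i = u' i) :
    st A B x₁ u k = st A B x₁ u' k := by
  induction k with
  | zero => rfl
  | succ k ih =>
    simp only [st, ih (fun i hi => hu i (Nat.lt_succ_of_lt hi)), hu k (Nat.lt_succ_self k)]

lemma isTrajectoryFrom_iff {n m p : ℕ} (A : Matrix (Fin n) (Fin n) ℝ) (B : Matrix (Fin n) (Fin m) ℝ)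
    (C : Matrix (Fin p) (Fin n) ℝ) (D : Matrix (Fin p) (Fin m) ℝ) (L : ℕ)
    (x₁ : Fin n → ℝ) (u : Fin L → Fin m → ℝ) (y : Fin L → Fin p → ℝ) :
    IsTrajectoryFrom A B C D L x₁ u y ↔
      ∀ k : Fin L, y k = C.mulVec (st A B x₁ (extFn L u) k.1) + D.mulVec (u k) := by
  constructor
  · rintro ⟨x, hx0, hxs, hy⟩
    have key : ∀ k : ℕ, ∀ h : k < L, x ⟨k, h⟩ = st A B x₁ (extFn L u) k := by
      intro k
      induction k with
      | zero => intro h; simpa [st] using hx0 h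
      | succ k ih =>
        intro h
        rw [hxs k h, ih (Nat.lt_of_succ_lt h)]
        simp only [st, extFn, dif_pos (Nat.lt_of_succ_lt h)]
    intro k
    rw [hy k, ← key k.1 k.2]
  · intro h
    refine ⟨fun k => st A B x₁ (extFn L u) k.1, fun _ => rfl, ?_, ?_⟩
    · intro k hk
      simp only [st, extFn, dif_pos (Nat.lt_of_succ_lt hk)]
    · intro k
      exact h k

lemma mulVec_sum_smul {ι : Type*} {a b : ℕ} (M : Matrix (Fin a) (Fin b) ℝ) (s : Finset ι)
    (g : ι → ℝ) (v : ι → Fin b → ℝ) :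
    M.mulVec (∑ j ∈ s, g j • v j) = ∑ j ∈ s, g j • M.mulVec (v j) := by
  simp only [← Matrix.mulVecLin_apply, map_sum, _root_.map_smul]

lemma st_sum {n m : ℕ} (A : Matrix (Fin n) (Fin n) ℝ) (B : Matrix (Fin n) (Fin m) ℝ)
    {ι : Type*} (s : Finset ι) (g : ι → ℝ) (xf : ι → Fin n → ℝ) (uf : ι → ℕ → Fin m → ℝ)
    (k : ℕ) :
    st A B (∑ j ∈ s, g j • xf j) (fun t => ∑ j ∈ s, g j • uf j t) k
      = ∑ j ∈ s, g j • st A B (xf j) (uf j) k := by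
  induction k with
  | zero => rfl
  | succ k ih =>
    simp only [st, ih, mulVec_sum_smul, ← Finset.sum_add_distrib, smul_add]

lemma st_zero_input {n m : ℕ} (A : Matrix (Fin n) (Fin n) ℝ) (B : Matrix (Fin n) (Fin m) ℝ)
    (x₁ : Fin n → ℝ) (k : ℕ) :
    st A B x₁ (fun _ => 0) k = (A ^ k).mulVec x₁ := by
  induction k with
  | zero => simp [st]
  | succ k ih => simp [st, ih, Matrix.mulVec_mulVec, ← pow_succ']

lemma append_mulVec_sum {a b m T : ℕ} (f1 : Matrix (Fin a × Fin m) (Fin T) ℝ)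
    (f2 : Matrix (Fin b × Fin m) (Fin T) ℝ) (g : Fin T → ℝ) (k : Fin (a + b)) :
    Fin.append (fun k i => f1.mulVec g (k, i)) (fun k i => f2.mulVec g (k, i)) k
      = ∑ j : Fin T, g j • Fin.append (fun k i => f1 (k, i) j) (fun k i => f2 (k, i) j) k := by
  induction k using Fin.addCases with
  | left k =>
    funext i
    simp [Fin.append_left, Matrix.mulVec, dotProduct, Finset.sum_apply, mul_comm]
  | right k =>
    funext i
    simp [Fin.append_right, Matrix.mulVec, dotProduct, Finset.sum_apply, mul_comm]


lemma surj_of_rank_rows {Q : Type*} [Fintype Q] {T : ℕ} (M : Matrix Q (Fin T) ℝ)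
    (h : M.rank = Fintype.card Q) : Function.Surjective M.mulVec := by
  have : LinearMap.range M.mulVecLin = ⊤ := by
    apply Submodule.eq_top_of_finrank_eq
    rw [← Matrix.rank, h, Module.finrank_pi]
  intro v
  obtain ⟨g, hg⟩ := (LinearMap.range_eq_top.1 this) v
  exact ⟨g, hg⟩

lemma inj_of_rank_cols {Q : Type*} [Fintype Q] {nn : ℕ} (M : Matrix Q (Fin nn) ℝ)
    (h : M.rank = nn) (v : Fin nn → ℝ) (hv : M.mulVec v = 0) : v = 0 := by
  have hk : LinearMap.ker M.mulVecLin = ⊥ := by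
    rw [← Submodule.finrank_eq_zero (S := LinearMap.ker M.mulVecLin)]
    have := LinearMap.finrank_range_add_finrank_ker M.mulVecLin
    rw [← Matrix.rank, h, Module.finrank_pi, Fintype.card_fin] at this
    omega
  have := LinearMap.ker_eq_bot.1 hk
  exact this (by simpa [Matrix.mulVecLin_apply] using hv)

lemma agg {n m p T_ini N T : ℕ}
    (A : Matrix (Fin n) (Fin n) ℝ) (B : Matrix (Fin n) (Fin m) ℝ)
    (C : Matrix (Fin p) (Fin n) ℝ) (D : Matrix (Fin p) (Fin m) ℝ)
    (Uini : Matrix (Fin T_ini × Fin m) (Fin T) ℝ) (UN : Matrix (Fin N × Fin m) (Fin T) ℝ)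
    (Yini : Matrix (Fin T_ini × Fin p) (Fin T) ℝ) (YN : Matrix (Fin N × Fin p) (Fin T) ℝ)
    (X1 : Matrix (Fin n) (Fin T) ℝ)
    (hdata : ∀ j : Fin T, IsTrajectoryFrom A B C D (T_ini + N) (fun i => X1 i j)
      (Fin.append (fun k i => Uini (k, i) j) (fun k i => UN (k, i) j))
      (Fin.append (fun k i => Yini (k, i) j) (fun k i => YN (k, i) j)))
    (g : Fin T → ℝ) (k : Fin (T_ini + N)) :
    Fin.append (fun k i => Yini.mulVec g (k, i)) (fun k i => YN.mulVec g (k, i)) k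
      = C.mulVec (st A B (X1.mulVec g)
          (extFn (T_ini + N)
            (Fin.append (fun k i => Uini.mulVec g (k, i)) (fun k i => UN.mulVec g (k, i)))) k.1)
        + D.mulVec
            (Fin.append (fun k i => Uini.mulVec g (k, i)) (fun k i => UN.mulVec g (k, i)) k) := by
  set uu : Fin T → Fin (T_ini + N) → Fin m → ℝ :=
    fun j => Fin.append (fun k i => Uini (k, i) j) (fun k i => UN (k, i) j) with huu
  set yy : Fin T → Fin (T_ini + N) → Fin p → ℝ :=
    fun j => Fin.append (fun k i => Yini (k, i) j) (fun k i => YN (k, i) j) with hyy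
  have hu : ∀ k : Fin (T_ini + N),
      Fin.append (fun k i => Uini.mulVec g (k, i)) (fun k i => UN.mulVec g (k, i)) k
        = ∑ j : Fin T, g j • uu j k := fun k => append_mulVec_sum Uini UN g k
  have hy : ∀ k : Fin (T_ini + N),
      Fin.append (fun k i => Yini.mulVec g (k, i)) (fun k i => YN.mulVec g (k, i)) k
        = ∑ j : Fin T, g j • yy j k := fun k => append_mulVec_sum Yini YN g k
  have hx : X1.mulVec g = ∑ j : Fin T, g j • (fun i => X1 i j) := by
    funext i
    simp [Matrix.mulVec, dotProduct, Finset.sum_apply, mul_comm]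
  have hext : extFn (T_ini + N) (Fin.append (fun k i => Uini.mulVec g (k, i))
      (fun k i => UN.mulVec g (k, i)))
      = fun t => ∑ j : Fin T, g j • extFn (T_ini + N) (uu j) t := by
    funext t
    by_cases h : t < T_ini + N
    · simp only [extFn, dif_pos h]
      exact hu ⟨t, h⟩
    · simp [extFn, dif_neg h]
  rw [hy k, hu k, hx, hext, st_sum, mulVec_sum_smul, mulVec_sum_smul, ← Finset.sum_add_distrib]
  refine Finset.sum_congr rfl fun j _ => ?_
  rw [(isTrajectoryFrom_iff A B C D (T_ini + N) (fun i => X1 i j) (uu j) (yy j)).1 (hdata j) k,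
    smul_add]

/-- **Equivalence of the DeePC and SPC constraint sets.** -/
theorem deepc_spc_constraint_equivalence {n m p T_ini N T : ℕ}
    (A : Matrix (Fin n) (Fin n) ℝ) (B : Matrix (Fin n) (Fin m) ℝ)
    (C : Matrix (Fin p) (Fin n) ℝ) (D : Matrix (Fin p) (Fin m) ℝ)
    (Uini : Matrix (Fin T_ini × Fin m) (Fin T) ℝ) (UN : Matrix (Fin N × Fin m) (Fin T) ℝ)
    (Yini : Matrix (Fin T_ini × Fin p) (Fin T) ℝ) (YN : Matrix (Fin N × Fin p) (Fin T) ℝ)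
    (X1 : Matrix (Fin n) (Fin T) ℝ)
    (hdata : ∀ j : Fin T, IsTrajectoryFrom A B C D (T_ini + N) (fun i => X1 i j)
      (Fin.append (fun k i => Uini (k, i) j) (fun k i => UN (k, i) j))
      (Fin.append (fun k i => Yini (k, i) j) (fun k i => YN (k, i) j)))
    (hrank : (Matrix.fromRows X1 (Matrix.fromRows Uini UN)).rank = n + (T_ini + N) * m)
    (hobs : (obsMat A C T_ini).rank = n)
    (M : Matrix ((Fin T_ini × Fin p) ⊕ (Fin T_ini × Fin m) ⊕ (Fin N × Fin m)) (Fin T) ℝ)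
    (hM : M = Matrix.fromRows Yini (Matrix.fromRows Uini UN))
    (Mp : Matrix (Fin T) ((Fin T_ini × Fin p) ⊕ (Fin T_ini × Fin m) ⊕ (Fin N × Fin m)) ℝ)
    (hMp : IsMoorePenrose M Mp)
    (uini : Fin T_ini → Fin m → ℝ) (yini : Fin T_ini → Fin p → ℝ)
    (hini : IsTrajectory A B C D T_ini uini yini) :
    ∀ (uN : Fin N → Fin m → ℝ) (yN : Fin N → Fin p → ℝ),
      (∃ g : Fin T → ℝ,
        Yini.mulVec g = (fun ki => yini ki.1 ki.2) ∧
        Uini.mulVec g = (fun ki => uini ki.1 ki.2) ∧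
        UN.mulVec g = (fun ki => uN ki.1 ki.2) ∧
        YN.mulVec g = (fun ki => yN ki.1 ki.2)) ↔
      (fun ki : Fin N × Fin p => yN ki.1 ki.2) =
        (YN * Mp).mulVec (Sum.elim (fun ki : Fin T_ini × Fin p => yini ki.1 ki.2)
          (Sum.elim (fun ki : Fin T_ini × Fin m => uini ki.1 ki.2)
            (fun ki : Fin N × Fin m => uN ki.1 ki.2))) := by
  intro uN yN
  have hext0 : extFn (T_ini + N) (fun _ => (0 : Fin m → ℝ)) = fun _ => 0 := by
    funext t
    simp [extFn]
  -- kernel inclusion:  ker M ⊆ ker YN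
  have hker : ∀ g : Fin T → ℝ, Yini.mulVec g = 0 → Uini.mulVec g = 0 → UN.mulVec g = 0 →
      YN.mulVec g = 0 := by
    intro g h1 h2 h3
    have hu0 : (Fin.append (fun k i => Uini.mulVec g (k, i)) (fun k i => UN.mulVec g (k, i)))
        = fun _ => (0 : Fin m → ℝ) := by
      funext k'
      induction k' using Fin.addCases with
      | left k' => funext i; rw [Fin.append_left]; rw [h2]; rfl
      | right k' => funext i; rw [Fin.append_right]; rw [h3]; rfl
    have hx0 : X1.mulVec g = 0 := by
      apply inj_of_rank_cols _ hobs
      funext ki'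
      obtain ⟨k', i'⟩ := ki'
      have hA := agg A B C D Uini UN Yini YN X1 hdata g (Fin.castAdd N k')
      rw [hu0, hext0, Fin.append_left] at hA
      have hL : (fun i => Yini.mulVec g (k', i)) = fun _ => (0 : ℝ) := by
        funext i; rw [h1]; rfl
      rw [hL] at hA
      have hcoe : ((Fin.castAdd N k') : ℕ) = (k' : ℕ) := rfl
      rw [hcoe, st_zero_input] at hA
      have := congrFun hA i'
      simp only [Pi.add_apply, Matrix.mulVec_zero, Pi.zero_apply, add_zero] at this
      have hob : (obsMat A C T_ini).mulVec (X1.mulVec g) (k', i')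
          = ((C * A ^ (k' : ℕ)).mulVec (X1.mulVec g)) i' := rfl
      rw [hob]
      simpa [Matrix.mulVec_mulVec, Matrix.mul_assoc] using this.symm
    funext ki
    obtain ⟨k, i⟩ := ki
    have hA := agg A B C D Uini UN Yini YN X1 hdata g (Fin.natAdd T_ini k)
    rw [hu0, hext0, hx0, Fin.append_right, st_zero_input] at hA
    have := congrFun hA i
    simpa [Matrix.mulVec_zero] using this
  -- projector identity
  have hproj : ∀ g : Fin T → ℝ, YN.mulVec ((Mp * M).mulVec g) = YN.mulVec g := by
    intro g
    have hMMg : M.mulVec ((Mp * M).mulVec g) = M.mulVec g := by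
      rw [Matrix.mulVec_mulVec, ← Matrix.mul_assoc, hMp.1]
    set d : Fin T → ℝ := g - (Mp * M).mulVec g with hd
    have hdiff : (Matrix.fromRows Yini (Matrix.fromRows Uini UN)).mulVec d = 0 := by
      rw [← hM, hd, Matrix.mulVec_sub, hMMg, sub_self]
    rw [fromRows_mulVec, fromRows_mulVec] at hdiff
    have e1 : Yini.mulVec d = 0 := by
      funext q; exact congrFun hdiff (Sum.inl q)
    have e2 : Uini.mulVec d = 0 := by
      funext q; exact congrFun hdiff (Sum.inr (Sum.inl q))
    have e3 : UN.mulVec d = 0 := by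
      funext q; exact congrFun hdiff (Sum.inr (Sum.inr q))
    have hz := hker _ e1 e2 e3
    rw [Matrix.mulVec_sub] at hz
    exact (sub_eq_zero.1 hz).symm
  -- existence of g hitting a prescribed initial state and inputs
  have hexist : ∀ (ξ : Fin n → ℝ) (a : Fin T_ini × Fin m → ℝ) (b : Fin N × Fin m → ℝ),
      ∃ g : Fin T → ℝ, X1.mulVec g = ξ ∧ Uini.mulVec g = a ∧ UN.mulVec g = b := by
    intro ξ a b
    have hcard : (Matrix.fromRows X1 (Matrix.fromRows Uini UN)).rank
        = Fintype.card (Fin n ⊕ ((Fin T_ini × Fin m) ⊕ (Fin N × Fin m))) := by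
      rw [hrank]
      simp [Fintype.card_sum, Fintype.card_prod, Fintype.card_fin]
      ring
    obtain ⟨g, hg⟩ := surj_of_rank_rows _ hcard (Sum.elim ξ (Sum.elim a b))
    rw [fromRows_mulVec, fromRows_mulVec] at hg
    exact ⟨g, funext fun i => congrFun hg (Sum.inl i),
      funext fun q => congrFun hg (Sum.inr (Sum.inl q)),
      funext fun q => congrFun hg (Sum.inr (Sum.inr q))⟩
  -- a particular g₀ realizing (uini, yini, uN)
  obtain ⟨ξ, hξ⟩ := hini
  obtain ⟨g0, hg0x, hg0u, hg0uN⟩ :=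
    hexist ξ (fun ki => uini ki.1 ki.2) (fun ki => uN ki.1 ki.2)
  have hYini0 : Yini.mulVec g0 = fun ki => yini ki.1 ki.2 := by
    funext ki
    obtain ⟨k, i⟩ := ki
    have hA := agg A B C D Uini UN Yini YN X1 hdata g0 (Fin.castAdd N k)
    rw [Fin.append_left, Fin.append_left] at hA
    have hini' := (isTrajectoryFrom_iff A B C D T_ini ξ uini yini).1 hξ k
    have hstc : st A B (X1.mulVec g0)
        (extFn (T_ini + N) (Fin.append (fun k i => Uini.mulVec g0 (k, i))
          (fun k i => UN.mulVec g0 (k, i)))) (k : ℕ)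
        = st A B ξ (extFn T_ini uini) (k : ℕ) := by
      rw [hg0x]
      apply st_congr
      intro t ht
      have ht1 : t < T_ini := lt_trans ht k.2
      have ht2 : t < T_ini + N := lt_of_lt_of_le ht1 (Nat.le_add_right _ _)
      simp only [extFn, dif_pos ht1, dif_pos ht2]
      have hc : (⟨t, ht2⟩ : Fin (T_ini + N)) = Fin.castAdd N ⟨t, ht1⟩ := rfl
      rw [hc, Fin.append_left]
      funext i'
      rw [hg0u]
    have hcoe : ((Fin.castAdd N k) : ℕ) = (k : ℕ) := rfl
    rw [hcoe, hstc] at hA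
    have hDu : (fun i => Uini.mulVec g0 (k, i)) = uini k := by
      funext i'; rw [hg0u]
    rw [hDu] at hA
    have := congrFun hA i
    rw [this, hini']
  -- the stacked data vector
  set v : ((Fin T_ini × Fin p) ⊕ (Fin T_ini × Fin m) ⊕ (Fin N × Fin m)) → ℝ :=
    Sum.elim (fun ki : Fin T_ini × Fin p => yini ki.1 ki.2)
      (Sum.elim (fun ki : Fin T_ini × Fin m => uini ki.1 ki.2)
        (fun ki : Fin N × Fin m => uN ki.1 ki.2)) with hv
  have hmain : ∀ g : Fin T → ℝ, M.mulVec g = v → (YN * Mp).mulVec v = YN.mulVec g := by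
    intro g hg
    have h := hproj g
    rw [← Matrix.mulVec_mulVec] at h
    rw [← hg, ← Matrix.mulVec_mulVec]
    exact h
  constructor
  · rintro ⟨g, hgy, hgu, hguN, hgyN⟩
    have hMg : M.mulVec g = v := by
      rw [hM, fromRows_mulVec, fromRows_mulVec, hgy, hgu, hguN, hv]
    rw [← hgyN, hmain g hMg]
  · intro hyN
    refine ⟨g0, hYini0, hg0u, hg0uN, ?_⟩
    have hMg0 : M.mulVec g0 = v := by
      rw [hM, fromRows_mulVec, fromRows_mulVec, hYini0, hg0u, hg0uN, hv]
    rw [hyN, hmain g0 hMg0]
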